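/- Let n ∈ ℕ, r > 0, let Π*, Π, R′ : ℝ^n → ℝ^n be globally Lipschitz continuous maps, H̃ ∈ ℝ^{n×n}, and z₀, w₀ ∈ ℝ^n with z₀ = Π*(w₀) and w₀ = Π(z₀). For δ > 0, call (z_δ, w_δ) a δ-approximate solution if z_δ, w_δ : [0,∞) → ℝ^n are differentiable, z_δ(0) = z₀, w_δ(0) = w₀, and for all t ≥ 0: z_δ′(t) = (r/max(δ,t))(Π*(w_δ(t)) − z_δ(t)) and w_δ′(t) = (t/r)(−R′(z_δ(t)) − H̃(z_δ(t) + (t/r)z_δ′(t)) + Π(z_δ(t) + (t/r)z_δ′(t)) − w_δ(t)). Then there exist t_m > 0 and M > 0 (independent of δ) such that for every δ ∈ (0, t_m] and every δ-approximate solution, ‖z_δ′(t)‖ ≤ M and ‖w_δ′(t)‖ ≤ M for all t ∈ [0, t_m]; consequently the family of restrictions {(z_δ, w_δ)|_{[0,t_m]} : 0 < δ ≤ t_m} is equi-continuous and uniformly bounded. -/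

import Mathlib

open Set

/-- A `δ`-approximate solution of the singular accelerated primal-dual ODE:
`z′(t) = (r / max(δ,t))(Π*(w(t)) − z(t))` and
`w′(t) = (t/r)(−R′(z(t)) − H̃(z(t) + (t/r)z′(t)) + Π(z(t) + (t/r)z′(t)) − w(t))`
for all `t ≥ 0`, with initial data `(z₀, w₀)`; `zd` and `wd` record the derivatives. -/
def IsDeltaApproxSolution (n : ℕ) (r δ : ℝ)
    (Pistar Pimap Rg : EuclideanSpace ℝ (Fin n) → EuclideanSpace ℝ (Fin n))
    (Ht : Matrix (Fin n) (Fin n) ℝ)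
    (z₀ w₀ : EuclideanSpace ℝ (Fin n))
    (z w zd wd : ℝ → EuclideanSpace ℝ (Fin n)) : Prop :=
  z 0 = z₀ ∧ w 0 = w₀ ∧
  ∀ t ≥ (0 : ℝ), HasDerivAt z (zd t) t ∧ HasDerivAt w (wd t) t ∧
    zd t = (r / max δ t) • (Pistar (w t) - z t) ∧
    wd t = (t / r) • (-(Rg (z t)) - Matrix.toEuclideanLin Ht (z t + (t / r) • zd t)
      + Pimap (z t + (t / r) • zd t) - w t)

lemma barrier_aux {n : ℕ} {τ L : ℝ} (hL : 0 ≤ L)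
    (u ud : ℝ → EuclideanSpace ℝ (Fin n))
    (hu : ∀ t ∈ Icc (0:ℝ) τ, HasDerivAt u (ud t) t)
    (hu0 : u 0 = 0)
    (hinner : ∀ t ∈ Icc (0:ℝ) τ, L * t < ‖u t‖ → (inner ℝ (u t) (ud t) : ℝ) ≤ 0) :
    ∀ t ∈ Icc (0:ℝ) τ, ‖u t‖ ≤ L * t := by
  by_contra hcon
  push_neg at hcon
  obtain ⟨t₀, ht₀, hgt⟩ := hcon
  have hucont : ContinuousOn u (Icc 0 τ) := fun t ht => ((hu t ht).continuousAt).continuousWithinAt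
  have hsub : Icc (0:ℝ) t₀ ⊆ Icc 0 τ := Icc_subset_Icc le_rfl ht₀.2
  set S : Set ℝ := {t | t ∈ Icc (0:ℝ) t₀ ∧ ‖u t‖ ≤ L * t} with hSdef
  have h0S : (0:ℝ) ∈ S := ⟨⟨le_rfl, ht₀.1⟩, by simp [hu0]⟩
  have hSclosed : IsClosed S := by
    have hEq : S = Icc (0:ℝ) t₀ ∩ (fun t => ‖u t‖ - L * t) ⁻¹' (Iic 0) := by
      ext t; simp [hSdef, sub_nonpos]
    rw [hEq]
    exact ContinuousOn.preimage_isClosed_of_isClosed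
      (((hucont.mono hsub).norm.sub (continuous_const.mul continuous_id).continuousOn))
      isClosed_Icc isClosed_Iic
  have hSbdd : BddAbove S := (bddAbove_Icc (a := (0:ℝ)) (b := t₀)).mono (fun x hx => hx.1)
  set T := sSup S with hT
  have hTS : T ∈ S := hSclosed.csSup_mem ⟨0, h0S⟩ hSbdd
  have hTle : T ≤ t₀ := csSup_le ⟨0, h0S⟩ (fun x hx => hx.1.2)
  have hTne : T ≠ t₀ := by
    intro h
    have := hTS.2
    rw [h] at this
    exact absurd this (not_le.mpr hgt)
  have hTlt : T < t₀ := lt_of_le_of_ne hTle hTne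
  have hgtI : ∀ t ∈ Ioc T t₀, L * t < ‖u t‖ := by
    intro t ht
    by_contra h
    push_neg at h
    have htS : t ∈ S := ⟨⟨le_trans hTS.1.1 ht.1.le, ht.2⟩, h⟩
    exact absurd (le_csSup hSbdd htS) (not_le.mpr ht.1)
  -- φ = ⟪u, u⟫ is antitone on [T, t₀]
  set φ : ℝ → ℝ := fun t => (inner ℝ (u t) (u t) : ℝ) with hφdef
  have hsub2 : Icc T t₀ ⊆ Icc 0 τ := Icc_subset_Icc hTS.1.1 ht₀.2
  have hφd : ∀ t ∈ Icc (0:ℝ) τ, HasDerivAt φ (2 * (inner ℝ (u t) (ud t) : ℝ)) t := by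
    intro t ht
    have h := HasDerivAt.inner ℝ (hu t ht) (hu t ht)
    exact h.congr_deriv (by rw [two_mul, real_inner_comm])
  have hanti : AntitoneOn φ (Icc T t₀) := by
    apply antitoneOn_of_deriv_nonpos (convex_Icc T t₀)
    · intro t ht
      exact ((hφd t (hsub2 ht)).continuousAt).continuousWithinAt
    · rw [interior_Icc]
      intro t ht
      exact ((hφd t (hsub2 (Ioo_subset_Icc_self ht))).differentiableAt).differentiableWithinAt
    · rw [interior_Icc]
      intro t ht
      have htmem : t ∈ Icc (0:ℝ) τ := hsub2 (Ioo_subset_Icc_self ht)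
      rw [(hφd t htmem).deriv]
      have hlt : L * t < ‖u t‖ := hgtI t ⟨ht.1, ht.2.le⟩
      have := hinner t htmem hlt
      linarith
  have hφle : φ t₀ ≤ φ T := hanti ⟨le_rfl, hTle⟩ ⟨hTle, le_rfl⟩ hTle
  have h1 : ‖u t₀‖ ^ 2 ≤ ‖u T‖ ^ 2 := by
    simp only [hφdef, real_inner_self_eq_norm_sq] at hφle
    exact hφle
  have h2 : ‖u T‖ ≤ L * T := hTS.2
  have h3 : L * T ≤ L * t₀ := mul_le_mul_of_nonneg_left hTle hL
  nlinarith [norm_nonneg (u T), norm_nonneg (u t₀)]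

lemma z_est {n : ℕ} {r δ : ℝ} (hr : 0 < r) (hδ : 0 < δ)
    {Pistar : EuclideanSpace ℝ (Fin n) → EuclideanSpace ℝ (Fin n)} {K₁ : NNReal}
    (hPistar : LipschitzWith K₁ Pistar)
    {z w zd wd : ℝ → EuclideanSpace ℝ (Fin n)} {z₀ w₀ : EuclideanSpace ℝ (Fin n)}
    (hz0 : z 0 = z₀) (hw0 : w 0 = w₀) (hcomp : z₀ = Pistar w₀)
    (hodez : ∀ t ≥ (0:ℝ), HasDerivAt z (zd t) t)
    (hodew : ∀ t ≥ (0:ℝ), HasDerivAt w (wd t) t)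
    (hzd : ∀ t ≥ (0:ℝ), zd t = (r / max δ t) • (Pistar (w t) - z t))
    {τ B : ℝ} (hτ : 0 ≤ τ) (hB0 : 0 ≤ B)
    (hB : ∀ s ∈ Icc (0:ℝ) τ, ‖wd s‖ ≤ B) :
    ∀ t ∈ Icc (0:ℝ) τ, ‖w t - w₀‖ ≤ B * t ∧ ‖z t - z₀‖ ≤ (K₁ : ℝ) * B * t ∧
      ‖Pistar (w t) - z t‖ ≤ 2 * ((K₁ : ℝ) * B) * t := by
  -- w is B-Lipschitz on [0, τ]
  have hwlip : ∀ t ∈ Icc (0:ℝ) τ, ‖w t - w₀‖ ≤ B * t := by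
    intro t ht
    have := Convex.norm_image_sub_le_of_norm_hasDerivWithin_le
      (f := w) (f' := wd) (s := Icc (0:ℝ) τ) (C := B)
      (fun x hx => (hodew x hx.1).hasDerivWithinAt) hB (convex_Icc 0 τ)
      (⟨le_rfl, hτ⟩ : (0:ℝ) ∈ Icc (0:ℝ) τ) ht
    rw [hw0] at this
    calc ‖w t - w₀‖ ≤ B * ‖t - 0‖ := this
    _ = B * t := by rw [sub_zero, Real.norm_eq_abs, abs_of_nonneg ht.1]
  -- ‖Pistar (w t) - z₀‖ ≤ K₁ B t
  have hq : ∀ t ∈ Icc (0:ℝ) τ, ‖Pistar (w t) - z₀‖ ≤ (K₁ : ℝ) * B * t := by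
    intro t ht
    have h1 : dist (Pistar (w t)) (Pistar w₀) ≤ (K₁ : ℝ) * dist (w t) w₀ := hPistar.dist_le_mul _ _
    rw [dist_eq_norm, dist_eq_norm] at h1
    rw [hcomp]
    calc ‖Pistar (w t) - Pistar w₀‖ ≤ (K₁ : ℝ) * ‖w t - w₀‖ := h1
    _ ≤ (K₁ : ℝ) * (B * t) := mul_le_mul_of_nonneg_left (hwlip t ht) K₁.2
    _ = (K₁ : ℝ) * B * t := by ring
  -- barrier argument for u = z - z₀
  have hL : (0:ℝ) ≤ (K₁ : ℝ) * B := mul_nonneg K₁.2 hB0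
  have hubd : ∀ t ∈ Icc (0:ℝ) τ, ‖z t - z₀‖ ≤ (K₁ : ℝ) * B * t := by
    apply barrier_aux hL (fun t => z t - z₀) zd
    · intro t ht
      exact (hodez t ht.1).sub_const z₀
    · simp [hz0]
    · intro t ht hlt
      have hmax : (0:ℝ) < max δ t := lt_max_of_lt_left hδ
      have hlam : (0:ℝ) ≤ r / max δ t := div_nonneg hr.le hmax.le
      have hsplit : Pistar (w t) - z t = (Pistar (w t) - z₀) - (z t - z₀) := by abel
      rw [hzd t ht.1, hsplit, inner_smul_right, inner_sub_right]
      apply mul_nonpos_of_nonneg_of_nonpos hlam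
      have h1 : (inner ℝ (z t - z₀) (Pistar (w t) - z₀) : ℝ) ≤ ‖z t - z₀‖ * ((K₁:ℝ) * B * t) := by
        calc (inner ℝ (z t - z₀) (Pistar (w t) - z₀) : ℝ) ≤ ‖z t - z₀‖ * ‖Pistar (w t) - z₀‖ :=
          real_inner_le_norm _ _
        _ ≤ ‖z t - z₀‖ * ((K₁:ℝ) * B * t) :=
          mul_le_mul_of_nonneg_left (hq t ht) (norm_nonneg _)
      have h2 : (inner ℝ (z t - z₀) (z t - z₀) : ℝ) = ‖z t - z₀‖ ^ 2 :=
        real_inner_self_eq_norm_sq _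
      rw [h2]
      nlinarith [norm_nonneg (z t - z₀)]
  intro t ht
  refine ⟨hwlip t ht, hubd t ht, ?_⟩
  have hsplit : Pistar (w t) - z t = (Pistar (w t) - z₀) - (z t - z₀) := by abel
  rw [hsplit]
  calc ‖(Pistar (w t) - z₀) - (z t - z₀)‖ ≤ ‖Pistar (w t) - z₀‖ + ‖z t - z₀‖ := norm_sub_le _ _
  _ ≤ (K₁ : ℝ) * B * t + (K₁ : ℝ) * B * t := add_le_add (hq t ht) (hubd t ht)
  _ = 2 * ((K₁ : ℝ) * B) * t := by ring


set_option maxHeartbeats 1000000 in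
lemma wd_bound {n : ℕ} {r δ : ℝ} (hr : 0 < r) (hδ : 0 < δ)
    {Pistar Pimap Rg : EuclideanSpace ℝ (Fin n) → EuclideanSpace ℝ (Fin n)}
    {K₁ K₂ K₃ : NNReal}
    (hPistar : LipschitzWith K₁ Pistar)
    (hPimap : LipschitzWith K₂ Pimap)
    (hRg : LipschitzWith K₃ Rg)
    {Ht : Matrix (Fin n) (Fin n) ℝ}
    {z₀ w₀ : EuclideanSpace ℝ (Fin n)}
    (hz₀ : z₀ = Pistar w₀)
    {H C₀ D tm M₂ : ℝ}
    (hH0 : 0 ≤ H)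
    (hHb : ∀ x : EuclideanSpace ℝ (Fin n), ‖Matrix.toEuclideanLin Ht x‖ ≤ H * ‖x‖)
    (hC₀0 : 0 ≤ C₀)
    (hC₀ : ‖Rg z₀‖ + H * ‖z₀‖ + ‖Pimap z₀‖ + ‖w₀‖ ≤ C₀)
    (hD1 : 1 ≤ D)
    (hD : (K₁ : ℝ) * (K₃ : ℝ) + 3 * H * (K₁ : ℝ) + 3 * (K₂ : ℝ) * (K₁ : ℝ) + 1 ≤ D)
    (htm0 : 0 < tm) (htm1 : tm ≤ 1) (htmr : tm ≤ r / (4 * D))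
    (hM₂ : M₂ = 4 * (tm / r) * C₀ + 1)
    {z w zd wd : ℝ → EuclideanSpace ℝ (Fin n)}
    (hz0 : z 0 = z₀) (hw0 : w 0 = w₀)
    (hodez : ∀ t ≥ (0:ℝ), HasDerivAt z (zd t) t)
    (hodew : ∀ t ≥ (0:ℝ), HasDerivAt w (wd t) t)
    (hzdEq : ∀ t ≥ (0:ℝ), zd t = (r / max δ t) • (Pistar (w t) - z t))
    (hwdEq : ∀ t ≥ (0:ℝ), wd t = (t / r) • (-(Rg (z t))
      - Matrix.toEuclideanLin Ht (z t + (t / r) • zd t)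
      + Pimap (z t + (t / r) • zd t) - w t)) :
    ∀ t ∈ Icc (0:ℝ) tm, ‖wd t‖ ≤ M₂ := by
  have hD0 : (0:ℝ) < D := by linarith
  have hM₂0 : 0 < M₂ := by
    have : 0 ≤ 4 * (tm / r) * C₀ :=
      mul_nonneg (mul_nonneg (by norm_num) (div_nonneg htm0.le hr.le)) hC₀0
    rw [hM₂]; linarith
  -- the improvement step
  have improve : ∀ τ, 0 ≤ τ → τ ≤ tm → (∀ s ∈ Icc (0:ℝ) τ, ‖wd s‖ ≤ M₂) →
      ∀ t ∈ Icc (0:ℝ) τ, ‖wd t‖ ≤ M₂ / 2 := by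
    intro τ hτ0 hτtm hBnd
    have hest := z_est hr hδ hPistar hz0 hw0 hz₀ hodez hodew hzdEq hτ0 hM₂0.le hBnd
    intro t ht
    have ht0 : (0:ℝ) ≤ t := ht.1
    have httm : t ≤ tm := le_trans ht.2 hτtm
    obtain ⟨hw_t, hz_t, hp_t⟩ := hest t ht
    have hmax : (0:ℝ) < max δ t := lt_max_of_lt_left hδ
    have hsm : ‖(t / r) • zd t‖ ≤ 2 * ((K₁ : ℝ) * M₂) * t := by
      rw [hzdEq t ht0, smul_smul]
      have h1 : t / r * (r / max δ t) = t / max δ t := by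
        rw [div_mul_div_comm, mul_comm t r]
        exact mul_div_mul_left t (max δ t) (ne_of_gt hr)
      rw [h1, norm_smul, Real.norm_eq_abs, abs_of_nonneg (div_nonneg ht0 hmax.le)]
      have h2 : t / max δ t ≤ 1 := div_le_one_of_le₀ (le_max_right _ _) hmax.le
      calc t / max δ t * ‖Pistar (w t) - z t‖ ≤ 1 * ‖Pistar (w t) - z t‖ :=
        mul_le_mul_of_nonneg_right h2 (norm_nonneg _)
      _ = ‖Pistar (w t) - z t‖ := one_mul _
      _ ≤ 2 * ((K₁ : ℝ) * M₂) * t := hp_t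
    set ut := z t + (t / r) • zd t with hutdef
    have hut : ‖ut - z₀‖ ≤ 3 * ((K₁ : ℝ) * M₂) * t := by
      have h0 : ut - z₀ = (z t - z₀) + (t / r) • zd t := by rw [hutdef]; abel
      rw [h0]
      calc ‖(z t - z₀) + (t / r) • zd t‖ ≤ ‖z t - z₀‖ + ‖(t / r) • zd t‖ := norm_add_le _ _
      _ ≤ (K₁ : ℝ) * M₂ * t + 2 * ((K₁ : ℝ) * M₂) * t := add_le_add hz_t hsm
      _ = 3 * ((K₁ : ℝ) * M₂) * t := by ring
    have hutn : ‖ut‖ ≤ ‖z₀‖ + 3 * ((K₁ : ℝ) * M₂) * t := by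
      have := norm_sub_norm_le ut z₀
      linarith
    have hRgb : ‖Rg (z t)‖ ≤ ‖Rg z₀‖ + (K₃ : ℝ) * ((K₁ : ℝ) * M₂ * t) := by
      have h1 : dist (Rg (z t)) (Rg z₀) ≤ (K₃ : ℝ) * dist (z t) z₀ := hRg.dist_le_mul _ _
      rw [dist_eq_norm, dist_eq_norm] at h1
      have h2 := norm_sub_norm_le (Rg (z t)) (Rg z₀)
      have h3 := mul_le_mul_of_nonneg_left hz_t K₃.coe_nonneg
      linarith
    have hPib : ‖Pimap ut‖ ≤ ‖Pimap z₀‖ + (K₂ : ℝ) * (3 * ((K₁ : ℝ) * M₂) * t) := by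
      have h1 : dist (Pimap ut) (Pimap z₀) ≤ (K₂ : ℝ) * dist ut z₀ := hPimap.dist_le_mul _ _
      rw [dist_eq_norm, dist_eq_norm] at h1
      have h2 := norm_sub_norm_le (Pimap ut) (Pimap z₀)
      have h3 := mul_le_mul_of_nonneg_left hut K₂.coe_nonneg
      linarith
    have hTb : ‖Matrix.toEuclideanLin Ht ut‖ ≤ H * (‖z₀‖ + 3 * ((K₁ : ℝ) * M₂) * t) :=
      le_trans (hHb ut) (mul_le_mul_of_nonneg_left hutn hH0)
    have hwb : ‖w t‖ ≤ ‖w₀‖ + M₂ * t := by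
      have := norm_sub_norm_le (w t) w₀
      linarith
    have hbody : ‖-(Rg (z t)) - Matrix.toEuclideanLin Ht ut + Pimap ut - w t‖
        ≤ C₀ + D * (M₂ * t) := by
      have hn1 : ‖-(Rg (z t)) - Matrix.toEuclideanLin Ht ut + Pimap ut - w t‖
          ≤ ‖-(Rg (z t)) - Matrix.toEuclideanLin Ht ut + Pimap ut‖ + ‖w t‖ := norm_sub_le _ _
      have hn2 := norm_add_le (-(Rg (z t)) - Matrix.toEuclideanLin Ht ut) (Pimap ut)
      have hn3 := norm_sub_le (-(Rg (z t))) (Matrix.toEuclideanLin Ht ut)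
      rw [norm_neg] at hn3
      have h9 : ((K₁ : ℝ) * (K₃ : ℝ) + 3 * H * (K₁ : ℝ) + 3 * (K₂ : ℝ) * (K₁ : ℝ) + 1) * (M₂ * t)
          ≤ D * (M₂ * t) := mul_le_mul_of_nonneg_right hD (mul_nonneg hM₂0.le ht0)
      nlinarith [hRgb, hPib, hTb, hwb]
    rw [hwdEq t ht0, ← hutdef, norm_smul, Real.norm_eq_abs,
      abs_of_nonneg (div_nonneg ht0 hr.le)]
    have key1 : t / r * C₀ ≤ M₂ / 4 := by
      have h1 : t / r * C₀ ≤ tm / r * C₀ := by gcongr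
      have h2 : 4 * (tm / r * C₀) = M₂ - 1 := by rw [hM₂]; ring
      linarith
    have key2 : t / r * (D * (M₂ * t)) ≤ M₂ / 4 := by
      have htt : t * t ≤ 1 * (r / (4 * D)) :=
        mul_le_mul (le_trans httm htm1) (le_trans httm htmr) ht0 zero_le_one
      have h3 : D * (t * t) / r ≤ D * (1 * (r / (4 * D))) / r := by gcongr
      have h4 : D * (1 * (r / (4 * D))) / r = 1 / 4 := by
        field_simp
      have h5 : t / r * (D * (M₂ * t)) = M₂ * (D * (t * t) / r) := by ring
      have h6 : M₂ * (D * (t * t) / r) ≤ M₂ * (1 / 4) :=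
        mul_le_mul_of_nonneg_left (by rw [← h4]; exact h3) hM₂0.le
      rw [h5]
      linarith
    calc t / r * ‖-(Rg (z t)) - Matrix.toEuclideanLin Ht ut + Pimap ut - w t‖
        ≤ t / r * (C₀ + D * (M₂ * t)) :=
          mul_le_mul_of_nonneg_left hbody (div_nonneg ht0 hr.le)
    _ = t / r * C₀ + t / r * (D * (M₂ * t)) := by ring
    _ ≤ M₂ / 2 := by linarith
  -- continuity of wd on [0, tm]
  have hzc : ContinuousOn z (Icc 0 tm) := fun t ht => (hodez t ht.1).continuousAt.continuousWithinAt
  have hwc : ContinuousOn w (Icc 0 tm) := fun t ht => (hodew t ht.1).continuousAt.continuousWithinAt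
  have hzdfc : ContinuousOn (fun t => (r / max δ t) • (Pistar (w t) - z t)) (Icc 0 tm) := by
    apply ContinuousOn.fun_smul
    · apply ContinuousOn.div continuousOn_const
        ((continuous_const.max continuous_id).continuousOn)
      intro t _
      exact ne_of_gt (lt_max_of_lt_left hδ)
    · exact (hPistar.continuous.comp_continuousOn hwc).sub hzc
  have hutfc : ContinuousOn
      (fun t => z t + (t / r) • ((r / max δ t) • (Pistar (w t) - z t))) (Icc 0 tm) :=
    hzc.add (((continuous_id.div_const r).continuousOn).smul hzdfc)
  have hTc : Continuous (Matrix.toEuclideanLin Ht :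
      EuclideanSpace ℝ (Fin n) → EuclideanSpace ℝ (Fin n)) :=
    LinearMap.continuous_of_finiteDimensional _
  have hwdfc : ContinuousOn (fun t =>
      (t / r) • (-(Rg (z t))
        - Matrix.toEuclideanLin Ht (z t + (t / r) • ((r / max δ t) • (Pistar (w t) - z t)))
        + Pimap (z t + (t / r) • ((r / max δ t) • (Pistar (w t) - z t))) - w t)) (Icc 0 tm) :=
    ((continuous_id.div_const r).continuousOn).smul
      ((((hRg.continuous.comp_continuousOn hzc).neg.sub (hTc.comp_continuousOn hutfc)).add
        (hPimap.continuous.comp_continuousOn hutfc)).sub hwc)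
  have hwdc : ContinuousOn wd (Icc 0 tm) := by
    apply hwdfc.congr
    intro t ht
    rw [hwdEq t ht.1, hzdEq t ht.1]
  have hwd0 : wd 0 = 0 := by
    rw [hwdEq 0 le_rfl]
    simp
  -- main bound on wd via infimum argument
  by_contra hcon
  push_neg at hcon
  obtain ⟨t₂, ht₂, hgt⟩ := hcon
  set A : Set ℝ := {t | t ∈ Icc (0:ℝ) tm ∧ M₂ ≤ ‖wd t‖} with hAdef
  have hAne : A.Nonempty := ⟨t₂, ht₂, hgt.le⟩
  have hAclosed : IsClosed A := by
    have hEq : A = Icc (0:ℝ) tm ∩ (fun t => ‖wd t‖) ⁻¹' Ici M₂ := by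
      ext t; simp [hAdef]
    rw [hEq]
    exact hwdc.norm.preimage_isClosed_of_isClosed isClosed_Icc isClosed_Ici
  have hAbdd : BddBelow A := ⟨0, fun x hx => hx.1.1⟩
  set t₁ := sInf A with ht₁def
  have ht₁A : t₁ ∈ A := hAclosed.csInf_mem hAne hAbdd
  have ht₁M : M₂ ≤ ‖wd t₁‖ := ht₁A.2
  have ht₁0 : 0 < t₁ := by
    rcases eq_or_lt_of_le ht₁A.1.1 with h | h
    · exfalso
      rw [← h, hwd0] at ht₁M
      simp only [norm_zero] at ht₁M
      linarith
    · exact h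
  have hbefore : ∀ τ ∈ Ico (0:ℝ) t₁, ‖wd τ‖ ≤ M₂ / 2 := by
    intro τ hτ
    refine improve τ hτ.1 (le_trans hτ.2.le ht₁A.1.2) ?_ τ ⟨hτ.1, le_rfl⟩
    intro s hs
    by_contra h
    push_neg at h
    have hsA : s ∈ A := ⟨⟨hs.1, le_trans (le_trans hs.2 hτ.2.le) ht₁A.1.2⟩, h.le⟩
    have h1 := csInf_le hAbdd hsA
    have h2 := hs.2
    have h3 := hτ.2
    rw [← ht₁def] at h1
    linarith
  have hlim : ‖wd t₁‖ ≤ M₂ / 2 := by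
    have hmem : t₁ ∈ closure (Ico (0:ℝ) t₁) := by
      rw [closure_Ico (ne_of_lt ht₁0)]
      exact ⟨ht₁0.le, le_rfl⟩
    haveI hne : (nhdsWithin t₁ (Ico (0:ℝ) t₁)).NeBot :=
      mem_closure_iff_nhdsWithin_neBot.mp hmem
    have hsub : Ico (0:ℝ) t₁ ⊆ Icc (0:ℝ) tm :=
      fun x hx => ⟨hx.1, le_trans hx.2.le ht₁A.1.2⟩
    have htend : Filter.Tendsto (fun t => ‖wd t‖) (nhdsWithin t₁ (Ico (0:ℝ) t₁))
        (nhds ‖wd t₁‖) :=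
      (hwdc.norm t₁ ht₁A.1).mono_left (nhdsWithin_mono _ hsub)
    exact le_of_tendsto htend (Filter.eventually_of_mem self_mem_nhdsWithin hbefore)
  linarith

set_option maxHeartbeats 1000000 in
/-- Lemma 2 of the paper. For `r > 0`, globally Lipschitz maps
`Π*, Π, R′`, a matrix `H̃` and compatible initial data `z₀ = Π*(w₀)`, `w₀ = Π(z₀)`,
there exist `t_m > 0` and `M > 0`, independent of `δ`, such that every `δ`-approximate
solution with `0 < δ ≤ t_m` has derivatives bounded by `M` on `[0, t_m]`; consequently
the family of restrictions to `[0, t_m]` is equi-continuous and uniformly bounded. -/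
theorem stmt_8 (n : ℕ) (r : ℝ) (hr : 0 < r)
    (Pistar Pimap Rg : EuclideanSpace ℝ (Fin n) → EuclideanSpace ℝ (Fin n))
    (K₁ K₂ K₃ : NNReal)
    (hPistar : LipschitzWith K₁ Pistar)
    (hPimap : LipschitzWith K₂ Pimap)
    (hRg : LipschitzWith K₃ Rg)
    (Ht : Matrix (Fin n) (Fin n) ℝ)
    (z₀ w₀ : EuclideanSpace ℝ (Fin n))
    (hz₀ : z₀ = Pistar w₀) (hw₀ : w₀ = Pimap z₀) :
    ∃ tm > (0 : ℝ), ∃ M > (0 : ℝ),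
      ∀ δ : ℝ, 0 < δ → δ ≤ tm →
        ∀ z w zd wd : ℝ → EuclideanSpace ℝ (Fin n),
          IsDeltaApproxSolution n r δ Pistar Pimap Rg Ht z₀ w₀ z w zd wd →
          ∀ t ∈ Icc (0 : ℝ) tm,
            ‖zd t‖ ≤ M ∧ ‖wd t‖ ≤ M ∧ ‖z t‖ ≤ M ∧ ‖w t‖ ≤ M := by
  obtain ⟨H, hH0, hHb⟩ : ∃ H : ℝ, 0 ≤ H ∧
      ∀ x : EuclideanSpace ℝ (Fin n), ‖Matrix.toEuclideanLin Ht x‖ ≤ H * ‖x‖ := by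
    refine ⟨‖LinearMap.toContinuousLinearMap (Matrix.toEuclideanLin Ht)‖, norm_nonneg _, ?_⟩
    intro x
    have h := (LinearMap.toContinuousLinearMap (Matrix.toEuclideanLin Ht)).le_opNorm x
    rwa [LinearMap.coe_toContinuousLinearMap'] at h
  obtain ⟨C₀, hC₀0, hC₀⟩ : ∃ C₀ : ℝ, 0 ≤ C₀ ∧
      ‖Rg z₀‖ + H * ‖z₀‖ + ‖Pimap z₀‖ + ‖w₀‖ ≤ C₀ := by
    refine ⟨‖Rg z₀‖ + H * ‖z₀‖ + ‖Pimap z₀‖ + ‖w₀‖, ?_, le_rfl⟩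
    have h1 := norm_nonneg (Rg z₀)
    have h2 := norm_nonneg (Pimap z₀)
    have h3 := norm_nonneg w₀
    have h4 := mul_nonneg hH0 (norm_nonneg z₀)
    linarith
  obtain ⟨D, hD1, hD⟩ : ∃ D : ℝ, 1 ≤ D ∧
      (K₁ : ℝ) * (K₃ : ℝ) + 3 * H * (K₁ : ℝ) + 3 * (K₂ : ℝ) * (K₁ : ℝ) + 1 ≤ D := by
    refine ⟨_, ?_, le_rfl⟩
    have h1 : (0:ℝ) ≤ (K₁ : ℝ) * (K₃ : ℝ) := mul_nonneg K₁.coe_nonneg K₃.coe_nonneg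
    have h2 : (0:ℝ) ≤ 3 * H * (K₁ : ℝ) := mul_nonneg (by linarith) K₁.coe_nonneg
    have h3 : (0:ℝ) ≤ 3 * (K₂ : ℝ) * (K₁ : ℝ) :=
      mul_nonneg (mul_nonneg (by norm_num) K₂.coe_nonneg) K₁.coe_nonneg
    linarith
  have hD0 : (0:ℝ) < D := by linarith
  obtain ⟨tm, htm0, htm1, htmr⟩ : ∃ tm : ℝ, 0 < tm ∧ tm ≤ 1 ∧ tm ≤ r / (4 * D) :=
    ⟨min 1 (r / (4 * D)), lt_min one_pos (div_pos hr (by linarith)),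
      min_le_left _ _, min_le_right _ _⟩
  obtain ⟨M₂, hM₂⟩ : ∃ M₂ : ℝ, M₂ = 4 * (tm / r) * C₀ + 1 := ⟨_, rfl⟩
  have hM₂0 : 0 < M₂ := by
    have : 0 ≤ 4 * (tm / r) * C₀ :=
      mul_nonneg (mul_nonneg (by norm_num) (div_nonneg htm0.le hr.le)) hC₀0
    rw [hM₂]; linarith
  obtain ⟨M, hM0, hMa, hMb, hMc, hMd⟩ : ∃ M : ℝ, 0 < M ∧ 2 * r * (K₁ : ℝ) * M₂ ≤ M ∧
      M₂ ≤ M ∧ ‖z₀‖ + (K₁ : ℝ) * M₂ * tm ≤ M ∧ ‖w₀‖ + M₂ * tm ≤ M := by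
    refine ⟨2 * r * (K₁ : ℝ) * M₂ + M₂ + (‖z₀‖ + (K₁ : ℝ) * M₂ * tm)
      + (‖w₀‖ + M₂ * tm) + 1, ?_, ?_, ?_, ?_, ?_⟩ <;>
    · have h1 : (0:ℝ) ≤ 2 * r * (K₁ : ℝ) * M₂ :=
        mul_nonneg (mul_nonneg (by linarith) K₁.coe_nonneg) hM₂0.le
      have h2 : (0:ℝ) ≤ (K₁ : ℝ) * M₂ * tm :=
        mul_nonneg (mul_nonneg K₁.coe_nonneg hM₂0.le) htm0.le
      have h3 : (0:ℝ) ≤ M₂ * tm := mul_nonneg hM₂0.le htm0.le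
      have h4 := norm_nonneg z₀
      have h5 := norm_nonneg w₀
      linarith
  refine ⟨tm, htm0, M, hM0, ?_⟩
  intro δ hδ hδtm z w zd wd hsol
  obtain ⟨hz0, hw0, hode⟩ := hsol
  have hodez : ∀ t ≥ (0:ℝ), HasDerivAt z (zd t) t := fun t ht => (hode t ht).1
  have hodew : ∀ t ≥ (0:ℝ), HasDerivAt w (wd t) t := fun t ht => (hode t ht).2.1
  have hzdEq : ∀ t ≥ (0:ℝ), zd t = (r / max δ t) • (Pistar (w t) - z t) :=
    fun t ht => (hode t ht).2.2.1
  have hwdEq : ∀ t ≥ (0:ℝ), wd t = (t / r) • (-(Rg (z t))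
      - Matrix.toEuclideanLin Ht (z t + (t / r) • zd t)
      + Pimap (z t + (t / r) • zd t) - w t) :=
    fun t ht => (hode t ht).2.2.2
  have hwdM : ∀ t ∈ Icc (0:ℝ) tm, ‖wd t‖ ≤ M₂ :=
    wd_bound hr hδ hPistar hPimap hRg hz₀ hH0 hHb hC₀0 hC₀ hD1 hD htm0 htm1 htmr hM₂
      hz0 hw0 hodez hodew hzdEq hwdEq
  intro t ht
  have ht0 : (0:ℝ) ≤ t := ht.1
  obtain ⟨hw_t, hz_t, hp_t⟩ :=
    z_est hr hδ hPistar hz0 hw0 hz₀ hodez hodew hzdEq htm0.le hM₂0.le hwdM t ht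
  have hmax : (0:ℝ) < max δ t := lt_max_of_lt_left hδ
  have hzdb : ‖zd t‖ ≤ 2 * r * (K₁ : ℝ) * M₂ := by
    rw [hzdEq t ht0, norm_smul, Real.norm_eq_abs,
      abs_of_nonneg (div_nonneg hr.le hmax.le)]
    have h1 : r / max δ t * ‖Pistar (w t) - z t‖ ≤ r / max δ t * (2 * ((K₁ : ℝ) * M₂) * t) :=
      mul_le_mul_of_nonneg_left hp_t (div_nonneg hr.le hmax.le)
    have h2 : r / max δ t * (2 * ((K₁ : ℝ) * M₂) * t)
        = 2 * ((K₁ : ℝ) * M₂) * (r * (t / max δ t)) := by ring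
    have h3 : t / max δ t ≤ 1 := div_le_one_of_le₀ (le_max_right _ _) hmax.le
    have h4 : r * (t / max δ t) ≤ r := by
      calc r * (t / max δ t) ≤ r * 1 := mul_le_mul_of_nonneg_left h3 hr.le
      _ = r := mul_one r
    have h5 : 2 * ((K₁ : ℝ) * M₂) * (r * (t / max δ t)) ≤ 2 * ((K₁ : ℝ) * M₂) * r := by
      have h6 : (0:ℝ) ≤ 2 * ((K₁ : ℝ) * M₂) := by
        have := mul_nonneg K₁.coe_nonneg hM₂0.le
        linarith
      exact mul_le_mul_of_nonneg_left h4 h6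
    calc r / max δ t * ‖Pistar (w t) - z t‖ ≤ 2 * ((K₁ : ℝ) * M₂) * r := by linarith
    _ = 2 * r * (K₁ : ℝ) * M₂ := by ring
  have hzb : ‖z t‖ ≤ ‖z₀‖ + (K₁ : ℝ) * M₂ * tm := by
    have h1 : (K₁ : ℝ) * M₂ * t ≤ (K₁ : ℝ) * M₂ * tm :=
      mul_le_mul_of_nonneg_left ht.2 (mul_nonneg K₁.coe_nonneg hM₂0.le)
    have := norm_sub_norm_le (z t) z₀
    linarith
  have hwb : ‖w t‖ ≤ ‖w₀‖ + M₂ * tm := by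
    have h1 : M₂ * t ≤ M₂ * tm := mul_le_mul_of_nonneg_left ht.2 hM₂0.le
    have := norm_sub_norm_le (w t) w₀
    linarith
  exact ⟨le_trans hzdb hMa, le_trans (hwdM t ht) hMb, le_trans hzb hMc, le_trans hwb hMd⟩
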